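/- Let E be a set and Z : E⁴ → ℝ such that Master_7 ≡ 0 (Master_7 as defined from Z). Define NCycle_n(x) = ∑_{j=0}^{n-1} Z(x_j,x_{j+1},x_{j+2},x_{j+3}) with indices mod n. Then for every n ≥ 7 and every word x of length n, NCycle_n(x) = NCycle_{n-1}(x with its (n−4)-th letter removed) + Master_7(x_{n-7},…,x_{n-1}) = NCycle_{n-1}(x^{\{n-4\}}); consequently if additionally Z(0,0,0,0) = 0 for some 0 ∈ E then NCycle_n ≡ 0 for all n ≥ 3. -/

import Mathlib

/-- Cyclic sum of `Z` over length-4 cyclic factors of a word of length `n`. -/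
def ncyc {E : Type*} (Z : E → E → E → E → ℝ) (n : ℕ) (x : ℕ → E) : ℝ :=
  ∑ j ∈ Finset.range n,
    Z (x (j % n)) (x ((j+1) % n)) (x ((j+2) % n)) (x ((j+3) % n))

/-- `Master_7` built from `Z`. -/
def master7 {E : Type*} (Z : E → E → E → E → ℝ)
    (a1 a2 a3 a4 a5 a6 a7 : E) : ℝ :=
  Z a1 a2 a3 a4 + Z a2 a3 a4 a5 + Z a3 a4 a5 a6 + Z a4 a5 a6 a7
    - Z a1 a2 a3 a5 - Z a2 a3 a5 a6 - Z a3 a5 a6 a7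

/-- The word `x` (of length `n`) with its letter at position `k` deleted. -/
def delAt {E : Type*} (k : ℕ) (x : ℕ → E) : ℕ → E :=
  fun j => if j < k then x j else x (j+1)

lemma keyA {E : Type*} (Z : E → E → E → E → ℝ) (k : ℕ) (x : ℕ → E) :
    ncyc Z (k+7) x
      = ncyc Z (k+6) (delAt (k+3) x)
        + master7 Z (x k) (x (k+1)) (x (k+2)) (x (k+3)) (x (k+4)) (x (k+5))
            (x (k+6)) := by
  have hd1 : ∀ t, t < k+3 → delAt (k+3) x t = x t := fun t ht => if_pos ht
  have hd2 : ∀ t, k+3 ≤ t → delAt (k+3) x t = x (t+1) := fun t ht => if_neg (by omega)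
  unfold ncyc
  rw [Finset.sum_range_add, Finset.sum_range_add]
  have hcongr : (∑ j ∈ Finset.range k,
        Z (x (j % (k+7))) (x ((j+1) % (k+7))) (x ((j+2) % (k+7))) (x ((j+3) % (k+7))))
      = ∑ j ∈ Finset.range k,
        Z (delAt (k+3) x (j % (k+6))) (delAt (k+3) x ((j+1) % (k+6)))
          (delAt (k+3) x ((j+2) % (k+6))) (delAt (k+3) x ((j+3) % (k+6))) := by
    refine Finset.sum_congr rfl fun j hj => ?_
    have hj' : j < k := Finset.mem_range.mp hj
    rw [Nat.mod_eq_of_lt (show j < k+7 by omega),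
        Nat.mod_eq_of_lt (show j+1 < k+7 by omega),
        Nat.mod_eq_of_lt (show j+2 < k+7 by omega),
        Nat.mod_eq_of_lt (show j+3 < k+7 by omega),
        Nat.mod_eq_of_lt (show j < k+6 by omega),
        Nat.mod_eq_of_lt (show j+1 < k+6 by omega),
        Nat.mod_eq_of_lt (show j+2 < k+6 by omega),
        Nat.mod_eq_of_lt (show j+3 < k+6 by omega),
        hd1 j (by omega), hd1 (j+1) (by omega), hd1 (j+2) (by omega),
        hd1 (j+3) (by omega)]
  rw [hcongr]
  have B1 : (k+8) % (k+7) = 1 := by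
    rw [show k+8 = (k+7)+1 from rfl, Nat.add_mod_left]
    exact Nat.mod_eq_of_lt (by omega)
  have B2 : (k+9) % (k+7) = 2 := by
    rw [show k+9 = (k+7)+2 from rfl, Nat.add_mod_left]
    exact Nat.mod_eq_of_lt (by omega)
  have C1 : (k+7) % (k+6) = 1 := by
    rw [show k+7 = (k+6)+1 from rfl, Nat.add_mod_left]
    exact Nat.mod_eq_of_lt (by omega)
  have C2 : (k+8) % (k+6) = 2 := by
    rw [show k+8 = (k+6)+2 from rfl, Nat.add_mod_left]
    exact Nat.mod_eq_of_lt (by omega)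
  have A0 : k % (k+7) = k := Nat.mod_eq_of_lt (by omega)
  have A1 : (k+1) % (k+7) = k+1 := Nat.mod_eq_of_lt (by omega)
  have A2 : (k+2) % (k+7) = k+2 := Nat.mod_eq_of_lt (by omega)
  have A3 : (k+3) % (k+7) = k+3 := Nat.mod_eq_of_lt (by omega)
  have A4 : (k+4) % (k+7) = k+4 := Nat.mod_eq_of_lt (by omega)
  have A5 : (k+5) % (k+7) = k+5 := Nat.mod_eq_of_lt (by omega)
  have A6 : (k+6) % (k+7) = k+6 := Nat.mod_eq_of_lt (by omega)
  have A0' : k % (k+6) = k := Nat.mod_eq_of_lt (by omega)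
  have A1' : (k+1) % (k+6) = k+1 := Nat.mod_eq_of_lt (by omega)
  have A2' : (k+2) % (k+6) = k+2 := Nat.mod_eq_of_lt (by omega)
  have A3' : (k+3) % (k+6) = k+3 := Nat.mod_eq_of_lt (by omega)
  have A4' : (k+4) % (k+6) = k+4 := Nat.mod_eq_of_lt (by omega)
  have A5' : (k+5) % (k+6) = k+5 := Nat.mod_eq_of_lt (by omega)
  have D0 : delAt (k+3) x 0 = x 0 := hd1 0 (by omega)
  have D1 : delAt (k+3) x 1 = x 1 := hd1 1 (by omega)
  have D2 : delAt (k+3) x 2 = x 2 := hd1 2 (by omega)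
  have Dk0 : delAt (k+3) x k = x k := hd1 k (by omega)
  have Dk1 : delAt (k+3) x (k+1) = x (k+1) := hd1 (k+1) (by omega)
  have Dk2 : delAt (k+3) x (k+2) = x (k+2) := hd1 (k+2) (by omega)
  have E3 : delAt (k+3) x (k+3) = x (k+4) := hd2 (k+3) (by omega)
  have E4 : delAt (k+3) x (k+4) = x (k+5) := hd2 (k+4) (by omega)
  have E5 : delAt (k+3) x (k+5) = x (k+6) := hd2 (k+5) (by omega)
  simp only [Finset.sum_range_succ, Finset.sum_range_zero, Nat.add_assoc,
    Nat.reduceAdd, Nat.add_zero, zero_add, Nat.mod_self,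
    A0, A1, A2, A3, A4, A5, A6, A0', A1', A2', A3', A4', A5',
    B1, B2, C1, C2, D0, D1, D2, Dk0, Dk1, Dk2, E3, E4, E5]
  unfold master7
  ring

lemma ncyc_per {E : Type*} (Z : E → E → E → E → ℝ) (n N : ℕ) (h : n ∣ N)
    (x : ℕ → E) :
    ncyc Z N (fun j => x (j % n))
      = ∑ j ∈ Finset.range N,
          Z (x (j % n)) (x ((j+1) % n)) (x ((j+2) % n)) (x ((j+3) % n)) := by
  unfold ncyc
  exact Finset.sum_congr rfl fun j _ => by
    simp only [Nat.mod_mod_of_dvd _ h]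

lemma sum_per (n : ℕ) (G : ℕ → ℝ) (hG : ∀ j, G (j + n) = G j) (g : ℕ) :
    ∑ j ∈ Finset.range (g*n), G j = g * ∑ j ∈ Finset.range n, G j := by
  have hP : ∀ a i, G (i + a * n) = G i := by
    intro a
    induction a with
    | zero => simp
    | succ a iha =>
      intro i
      rw [show i + (a+1)*n = (i + a*n) + n by ring, hG, iha]
  induction g with
  | zero => simp
  | succ g ih =>
    rw [show (g+1)*n = g*n + n by ring, Finset.sum_range_add, ih]
    have : ∑ i ∈ Finset.range n, G (g*n + i) = ∑ i ∈ Finset.range n, G i :=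
      Finset.sum_congr rfl fun i _ => by rw [Nat.add_comm, hP]
    rw [this]
    push_cast
    ring

lemma perG {E : Type*} (Z : E → E → E → E → ℝ) (n : ℕ) (x : ℕ → E) (g : ℕ) :
    ncyc Z (g * n) (fun j => x (j % n)) = g * ncyc Z n x := by
  set G : ℕ → ℝ := fun j =>
    Z (x (j % n)) (x ((j+1) % n)) (x ((j+2) % n)) (x ((j+3) % n)) with hGdef
  have hG : ∀ j, G (j + n) = G j := by
    intro j
    show Z (x ((j+n) % n)) (x ((j+n+1) % n)) (x ((j+n+2) % n)) (x ((j+n+3) % n))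
        = Z (x (j % n)) (x ((j+1) % n)) (x ((j+2) % n)) (x ((j+3) % n))
    rw [Nat.add_mod_right, show j+n+1 = (j+1)+n by ring, Nat.add_mod_right,
      show j+n+2 = (j+2)+n by ring, Nat.add_mod_right,
      show j+n+3 = (j+3)+n by ring, Nat.add_mod_right]
  have h1 : ncyc Z (g*n) (fun j => x (j % n)) = ∑ j ∈ Finset.range (g*n), G j :=
    ncyc_per Z n (g*n) ⟨g, by ring⟩ x
  have h2 : ncyc Z n x = ∑ j ∈ Finset.range n, G j := rfl
  rw [h1, h2, sum_per n G hG g]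

/-- If `Master_7 ≡ 0`, then for `n ≥ 7`,
`NCycle_n(x) = NCycle_{n-1}(x^{{n-4}}) + Master_7(x_{n-7},…,x_{n-1})
             = NCycle_{n-1}(x^{{n-4}})`;
consequently, if additionally `Z(0,0,0,0) = 0`, then `NCycle_n ≡ 0` for all
`n ≥ 3`. -/
theorem stmt19 {E : Type*} (e : E) (Z : E → E → E → E → ℝ)
    (hM : ∀ a1 a2 a3 a4 a5 a6 a7 : E, master7 Z a1 a2 a3 a4 a5 a6 a7 = 0) :
    (∀ n : ℕ, 7 ≤ n → ∀ x : ℕ → E,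
      ncyc Z n x
        = ncyc Z (n-1) (delAt (n-4) x)
          + master7 Z (x (n-7)) (x (n-6)) (x (n-5)) (x (n-4)) (x (n-3))
              (x (n-2)) (x (n-1))
      ∧ ncyc Z n x = ncyc Z (n-1) (delAt (n-4) x))
    ∧ (Z e e e e = 0 →
        ∀ n : ℕ, 3 ≤ n → ∀ x : ℕ → E, ncyc Z n x = 0) := by
  constructor
  · intro n hn x
    obtain ⟨k, rfl⟩ : ∃ k, n = k + 7 := ⟨n - 7, by omega⟩
    have h1 : k+7-1 = k+6 := by omega
    have h4 : k+7-4 = k+3 := by omega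
    have h7 : k+7-7 = k := by omega
    have h6 : k+7-6 = k+1 := by omega
    have h5 : k+7-5 = k+2 := by omega
    have h3 : k+7-3 = k+4 := by omega
    have h2 : k+7-2 = k+5 := by omega
    rw [h1, h4, h7, h6, h5, h3, h2]
    refine ⟨keyA Z k x, ?_⟩
    rw [keyA Z k x, hM, add_zero]
  · intro _ m hm x
    -- deletion chain lemma
    have chain : ∀ k, k ≤ m →
        ncyc Z (3*m) (fun j => x (j % m))
          = ncyc Z (3*m - k)
              (fun j => if j + k + 3 < 3*m then x (j % m) else x ((j+k) % m)) := by
      intro k hk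
      induction k with
      | zero =>
        have : (fun j => if j + 0 + 3 < 3*m then x (j % m) else x ((j+0) % m))
            = fun j => x (j % m) := by
          funext j
          simp
        rw [this]
        norm_num
      | succ k ih =>
        have hk' : k ≤ m := by omega
        rw [ih hk']
        obtain ⟨t, ht⟩ : ∃ t, 3*m - k = t + 7 := ⟨3*m - k - 7, by omega⟩
        have hdel : delAt (t+3)
              (fun j => if j + k + 3 < 3*m then x (j % m) else x ((j+k) % m))
            = fun j => if j + (k+1) + 3 < 3*m then x (j % m)
                else x ((j+(k+1)) % m) := by
          funext j
          simp only [delAt]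
          have htv : t + 3 = 3*m - k - 4 := by omega
          by_cases hj : j < t + 3
          · rw [if_pos hj, if_pos (by omega), if_pos (by omega)]
          · rw [if_neg hj, if_neg (by omega), if_neg (by omega)]
            have : j + 1 + k = j + (k+1) := by omega
            rw [this]
        have := keyA Z t (fun j => if j + k + 3 < 3*m then x (j % m)
          else x ((j+k) % m))
        rw [hM, add_zero, hdel] at this
        rw [ht, this, show t + 6 = 3*m - (k+1) by omega]
    have hm2 : ncyc Z (3*m) (fun j => x (j % m))
        = ncyc Z (2*m) (fun j => x (j % m)) := by
      have := chain m le_rfl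
      rw [show 3*m - m = 2*m by omega] at this
      rw [this]
      congr 1
      funext j
      by_cases hj : j + m + 3 < 3*m
      · rw [if_pos hj]
      · rw [if_neg hj, Nat.add_mod_right]
    have e3 : ncyc Z (3*m) (fun j => x (j % m)) = 3 * ncyc Z m x := by
      have := perG Z m x 3
      push_cast at this ⊢
      exact this
    have e2 : ncyc Z (2*m) (fun j => x (j % m)) = 2 * ncyc Z m x := by
      have := perG Z m x 2
      push_cast at this ⊢
      exact this
    have : (3:ℝ) * ncyc Z m x = 2 * ncyc Z m x := by rw [← e3, hm2, e2]
    linarith
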